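/- For every integer n ≥ 2 and every real m with 0 < m < 1/2, the set E_{2m} is not a convex subset of ℂ^n. -/

import Mathlib

noncomputable section

/-- The pseudo-egg `E_{2m} ⊆ ℂ^n` with `n = k + 1`, written as `ℂ × ℂ^k`:
`{ z : |z₁|^{2m} + |z₂|² + … + |z_n|² < 1 }`. -/
def E2m (k : ℕ) (m : ℝ) : Set (ℂ × (Fin k → ℂ)) :=
  {z | ‖z.1‖ ^ (2 * m) + ∑ j, ‖z.2 j‖ ^ 2 < 1}

lemma aux_sum (k : ℕ) [NeZero k] (y : ℝ) :
    ∑ j : Fin k, ‖(if j = 0 then (y : ℂ) else 0)‖ ^ 2 = y ^ 2 := by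
  have h : ∀ j : Fin k, ‖(if j = 0 then (y : ℂ) else 0)‖ ^ 2
      = if j = 0 then y ^ 2 else 0 := by
    intro j; split <;> simp [Complex.norm_real, sq_abs]
  simp [h]

set_option maxHeartbeats 1000000 in
/-- For every integer `n ≥ 2` (here `n = k + 1` with `k ≥ 1`) and every real `m` with
`0 < m < 1/2`, the pseudo-egg `E_{2m}` is not a convex subset of `ℂ^n`. -/
theorem statement0 (k : ℕ) (hk : 1 ≤ k) (m : ℝ) (hm0 : 0 < m) (hm : m < 1 / 2) :
    ¬ Convex ℝ (E2m k m) := by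
  haveI : NeZero k := ⟨by omega⟩
  intro hconv
  have hm2 : 0 < 2 * m := by linarith
  have hm1 : 2 * m < 1 := by linarith
  set c2 : ℝ := (2 : ℝ) ^ (2 * m) with hc2def
  have hc2gt1 : 1 < c2 := by
    rw [hc2def, show (1:ℝ) = (2:ℝ) ^ (0:ℝ) by simp]
    exact Real.rpow_lt_rpow_of_exponent_lt one_lt_two hm2
  have hc2lt2 : c2 < 2 := by
    have h := Real.rpow_lt_rpow_of_exponent_lt (x := 2) one_lt_two hm1
    rwa [Real.rpow_one] at h
  set u : ℝ := min (1/2) ((2 - c2)/c2) with hudef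
  have hu0 : 0 < u := lt_min (by norm_num) (div_pos (by linarith) (by linarith))
  have huh : u ≤ 1/2 := min_le_left _ _
  have huc : u * c2 ≤ 2 - c2 := by
    have h := min_le_right (1/2) ((2 - c2)/c2)
    rw [← hudef] at h
    calc u * c2 ≤ ((2 - c2)/c2) * c2 := by
          apply mul_le_mul_of_nonneg_right h (by linarith)
      _ = 2 - c2 := by field_simp
  set η : ℝ := u * (2 - c2) / (16 * c2) with hηdef
  have hη0 : 0 < η := by
    apply div_pos (mul_pos hu0 (by linarith)) (by linarith)
  have hη16 : 16 * c2 * η = u * (2 - c2) := by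
    rw [hηdef]; field_simp
  have hηsmall : η ≤ 1/32 := by
    rw [hηdef]
    rw [div_le_iff₀ (by linarith)]
    nlinarith
  set t : ℝ := u ^ (2 * m)⁻¹ with htdef
  have ht0 : 0 < t := Real.rpow_pos_of_pos hu0 _
  have htu : t ^ (2 * m) = u := Real.rpow_inv_rpow hu0.le (ne_of_gt hm2)
  have htmid : (t / 2) ^ (2 * m) = u / c2 := by
    rw [Real.div_rpow ht0.le (by norm_num : (0:ℝ) ≤ 2), htu, hc2def]
  set w : ℝ := Real.sqrt (1 - u) with hwdef
  have hw2 : w ^ 2 = 1 - u := Real.sq_sqrt (by linarith)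
  have hw0 : 0 ≤ w := Real.sqrt_nonneg _
  have hwub : w ≤ 1 := by rw [hwdef]; exact Real.sqrt_le_one.mpr (by linarith)
  have hwlb : 1 - u/2 - u^2/2 ≤ w := by nlinarith [hw2, hw0]
  set s0 : ℝ := 1 - η with hs0def
  set s1 : ℝ := (1 - η) * w with hs1def
  -- the two points
  set p : ℂ × (Fin k → ℂ) := ((0 : ℂ), fun j => if j = 0 then (s0 : ℂ) else 0) with hpdef
  set q : ℂ × (Fin k → ℂ) := (((t : ℝ) : ℂ), fun j => if j = 0 then (s1 : ℂ) else 0) with hqdef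
  have hp : p ∈ E2m k m := by
    show ‖(0 : ℂ)‖ ^ (2*m) + ∑ j : Fin k, ‖(if j = 0 then (s0:ℂ) else 0)‖ ^ 2 < 1
    rw [aux_sum, norm_zero, Real.zero_rpow (ne_of_gt hm2)]
    nlinarith
  have hq : q ∈ E2m k m := by
    show ‖((t:ℝ) : ℂ)‖ ^ (2*m) + ∑ j : Fin k, ‖(if j = 0 then (s1:ℂ) else 0)‖ ^ 2 < 1
    rw [aux_sum, Complex.norm_real, Real.norm_eq_abs, abs_of_pos ht0, htu]
    have h1 : s1 ^ 2 = (1 - η)^2 * (1 - u) := by rw [hs1def, mul_pow, hw2]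
    rw [h1]
    have hlt : (1 - η)^2 * (1 - u) < 1 * (1 - u) :=
      mul_lt_mul_of_pos_right (by nlinarith) (by linarith)
    linarith
  have hmid := hconv hp hq (by norm_num : (0:ℝ) ≤ 1/2) (by norm_num : (0:ℝ) ≤ 1/2)
    (by norm_num : (1/2:ℝ) + 1/2 = 1)
  have hmeq : (1/2 : ℝ) • p + (1/2 : ℝ) • q
      = ((((t/2 : ℝ)) : ℂ), fun j => if j = 0 then (((s0 + s1)/2 : ℝ) : ℂ) else 0) := by
    apply Prod.ext
    · show (1/2 : ℝ) • (0 : ℂ) + (1/2 : ℝ) • ((t:ℝ) : ℂ) = (((t/2 : ℝ)) : ℂ)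
      simp [Complex.real_smul]
      push_cast
      ring
    · funext j
      show (1/2 : ℝ) • (if j = 0 then (s0:ℂ) else 0) + (1/2 : ℝ) • (if j = 0 then (s1:ℂ) else 0)
        = if j = 0 then (((s0 + s1)/2 : ℝ) : ℂ) else 0
      split
      · simp [Complex.real_smul]; push_cast; ring
      · simp
  rw [hmeq] at hmid
  have hmid2 : ‖(((t/2 : ℝ)) : ℂ)‖ ^ (2*m)
      + ∑ j : Fin k, ‖(if j = 0 then (((s0+s1)/2 : ℝ):ℂ) else 0)‖ ^ 2 < 1 := hmid
  rw [aux_sum, Complex.norm_real, Real.norm_eq_abs, abs_of_pos (by linarith : (0:ℝ) < t/2), htmid] at hmid2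
  -- derive the contradiction: u / c2 + ((s0 + s1)/2)^2 ≥ 1
  have hd : (u / c2) * c2 = u := div_mul_cancel₀ u (by linarith)
  have hs : s0 + s1 = (1 - η) * (1 + w) := by rw [hs0def, hs1def]; ring
  rw [hs] at hmid2
  have key : 1 ≤ u / c2 + ((1 - η) * (1 + w) / 2) ^ 2 := by
    have h1 : (1 + w)^2 ≥ 4 - 2*u - u^2 := by nlinarith [hw2, hwlb]
    have h2 : (1 - η)^2 ≥ 1 - 2*η := by nlinarith
    have h3 : (1 - η)^2 * (1 + w)^2 ≥ (1 - 2*η) * (4 - 2*u - u^2) := by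
      exact mul_le_mul h2 h1 (by nlinarith) (by positivity)
    have h4 : (1 - 2*η) * (4 - 2*u - u^2) ≥ 4 - 2*u - u^2 - 8*η := by nlinarith
    have h5 : u * (u * c2) ≤ u * (2 - c2) := mul_le_mul_of_nonneg_left huc hu0.le
    have h6 : ((1 - η) * (1 + w) / 2) ^ 2 = (1 - η)^2 * (1 + w)^2 / 4 := by ring
    rw [h6]
    nlinarith [h3, h4, h5, hη16, hd, hu0.le]
  linarith
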